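/- Let G be a Borel graph with degrees at most D on a standard Borel space I. Then there exists a metric d₀ on I generating the given Borel σ-algebra such that (I, d₀) is a compact metric space, d₀ has diameter at most 1, and d₀(x,y) = 1 for every edge xy of G. -/

import Mathlib

open MeasureTheory

/-- The ball of graph radius `r` around `x` in the graph `G` (as a vertex set,
including `x` itself). -/
def gball {I : Type*} (G : I → I → Prop) (x : I) : ℕ → Set I
  | 0 => {x}
  | r + 1 => gball G x r ∪ {z | ∃ w ∈ gball G x r, G w z}

/-- An `r`-neighborhood isomorphism between `x` and `y`: a rooted isomorphism of the
graph balls `B(x,r) → B(y,r)` sending `x` to `y` (encoded as a global map that is a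
bijection between the balls preserving adjacency in both directions). -/
def IsNbhdIso {I : Type*} (G : I → I → Prop) (r : ℕ) (x y : I) (φ : I → I) : Prop :=
  φ x = y ∧ Set.BijOn φ (gball G x r) (gball G y r) ∧
    ∀ u ∈ gball G x r, ∀ v ∈ gball G x r, (G u v ↔ G (φ u) (φ v))

/-- The displacement `d₀(φ) = sup_{z ∈ B(x,r)} d₀(z, φ(z))` of a neighborhood map. -/
noncomputable def disp {I : Type*} [MetricSpace I] (G : I → I → Prop) (x : I) (r : ℕ)
    (φ : I → I) : ℝ :=
  ⨆ z : gball G x r, dist (z : I) (φ z)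

/-- The neighborhood-isomorphism metric
`d(x,y) = inf over r and r-neighborhood isomorphisms φ of max {1/(r+1), d₀(φ)}`. -/
noncomputable def nbhdDist {I : Type*} [MetricSpace I] (G : I → I → Prop) (x y : I) : ℝ :=
  sInf {m | ∃ (r : ℕ) (φ : I → I), IsNbhdIso G r x y φ ∧
    m = max (1 / ((r : ℝ) + 1)) (disp G x r φ)}

/-- `degIn G B x` is the number of neighbors of `x` in `B`. -/
noncomputable def degIn {I : Type*} (G : I → I → Prop) (B : Set I) (x : I) : ℕ :=
  {y | y ∈ B ∧ G x y}.ncard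

/-- The vertex set of the connected component of `x`. -/
def compSet {I : Type*} (G : I → I → Prop) (x : I) : Set I := {y | Relation.ReflTransGen G x y}


open Set
open scoped Classical


section LN

variable {X : Type*} [MeasurableSpace X] [StandardBorelSpace X]

/-- Tuple sets: x admits a strictly increasing k-tuple inside its section. -/
def TT (S : Set (X × ℝ)) (k : ℕ) : Set X :=
  {x | ∃ y : Fin k → ℝ, StrictMono y ∧ ∀ i, (x, y i) ∈ S}

lemma mem_TT_iff {S : Set (X × ℝ)} (hfin : ∀ x, {t | (x,t) ∈ S}.Finite) (k : ℕ) (x : X) :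
    x ∈ TT S k ↔ k ≤ {t | (x,t) ∈ S}.ncard := by
  constructor
  · rintro ⟨y, hy, hmem⟩
    have hsub : range y ⊆ {t | (x,t) ∈ S} := by rintro t ⟨i, rfl⟩; exact hmem i
    have h1 : (range y).ncard = k := by
      rw [← Set.image_univ, Set.ncard_image_of_injOn (hy.injective.injOn), Set.ncard_univ,
        Nat.card_eq_fintype_card, Fintype.card_fin]
    calc k = (range y).ncard := h1.symm
    _ ≤ _ := Set.ncard_le_ncard hsub (hfin x)
  · intro hk
    have hcard : k ≤ (hfin x).toFinset.card := by
      rwa [Set.ncard_eq_toFinset_card _ (hfin x)] at hk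
    obtain ⟨B, hBsub, hBcard⟩ := Finset.exists_subset_card_eq hcard
    refine ⟨B.orderEmbOfFin hBcard, (B.orderEmbOfFin hBcard).strictMono, fun i => ?_⟩
    have := hBsub (Finset.orderEmbOfFin_mem B hBcard i)
    rwa [Set.Finite.mem_toFinset] at this

lemma measurableSet_TT (D : ℕ) {S : Set (X × ℝ)} (hS : MeasurableSet S)
    (hfin : ∀ x, {t | (x,t) ∈ S}.Finite) (hcard : ∀ x, {t | (x,t) ∈ S}.ncard ≤ D) :
    ∀ k, MeasurableSet (TT S k) := by
  suffices H : ∀ j k, D + 1 ≤ k + j → MeasurableSet (TT S k) by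
    intro k
    exact H (D+1) k (by omega)
  intro j
  induction j with
  | zero =>
    intro k hk
    have : TT S k = ∅ := by
      rw [Set.eq_empty_iff_forall_notMem]
      intro x hx
      have := (mem_TT_iff hfin k x).1 hx
      have := hcard x
      omega
    exact this ▸ MeasurableSet.empty
  | succ j ih =>
    intro k hk
    by_cases hk' : D + 1 ≤ k + j
    · exact ih k hk'
    have hT1 : MeasurableSet (TT S (k+1)) := ih (k+1) (by omega)
    set E : Set (X × (Fin k → ℝ)) :=
      {p | StrictMono p.2 ∧ (∀ i, (p.1, p.2 i) ∈ S) ∧ p.1 ∉ TT S (k+1)} with hE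
    have hEeq : E = {p : X × (Fin k → ℝ) | StrictMono p.2} ∩
        ((⋂ i, {p : X × (Fin k → ℝ) | (p.1, p.2 i) ∈ S}) ∩ {p | p.1 ∉ TT S (k+1)}) := by
      ext p
      simp only [hE, Set.mem_inter_iff, Set.mem_iInter, Set.mem_setOf_eq]
    have hEmeas : MeasurableSet E := by
      rw [hEeq]
      apply MeasurableSet.inter
      · have : {p : X × (Fin k → ℝ) | StrictMono p.2} =
            ⋂ (i) (j) (_ : i < j), {p : X × (Fin k → ℝ) | p.2 i < p.2 j} := by
          ext p
          simp only [Set.mem_iInter, Set.mem_setOf_eq]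
          exact ⟨fun h i j hij => h hij, fun h a b hab => h a b hab⟩
        rw [this]
        refine MeasurableSet.iInter fun i => MeasurableSet.iInter fun j =>
          MeasurableSet.iInter fun _ => ?_
        exact measurableSet_lt measurable_snd.eval measurable_snd.eval
      · apply MeasurableSet.inter
        · refine MeasurableSet.iInter fun i => ?_
          exact hS.preimage (measurable_fst.prodMk measurable_snd.eval)
        · exact hT1.compl.preimage measurable_fst
    have hinj : InjOn Prod.fst E := by
      rintro ⟨x, y⟩ ⟨hy, hymem, hxn⟩ ⟨x', y'⟩ ⟨hy', hymem', hxn'⟩ (h : x = x')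
      subst h
      have hsec : {t | (x, t) ∈ S}.ncard = k := by
        have h1 : k ≤ {t | (x,t) ∈ S}.ncard := (mem_TT_iff hfin k x).1 ⟨y, hy, hymem⟩
        have h2 : ¬ (k+1 ≤ {t | (x,t) ∈ S}.ncard) := fun h => hxn ((mem_TT_iff hfin _ x).2 h)
        omega
      have hr : ∀ z : Fin k → ℝ, StrictMono z → (∀ i, (x, z i) ∈ S) →
          range z = {t | (x,t) ∈ S} := by
        intro z hz hzm
        apply Set.eq_of_subset_of_ncard_le
        · rintro t ⟨i, rfl⟩; exact hzm i
        · rw [hsec, ← Set.image_univ, Set.ncard_image_of_injOn (hz.injective.injOn),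
            Set.ncard_univ, Nat.card_eq_fintype_card, Fintype.card_fin]
        · exact hfin x
      haveI : WellFoundedLT (Fin k) := inferInstance
      have : y = y' := by
        rw [← hy.range_inj hy', hr y hy hymem, hr y' hy' hymem']
      rw [this]
    have him : TT S k = (Prod.fst '' E) ∪ TT S (k+1) := by
      apply Set.Subset.antisymm
      · rintro x ⟨y, hy, hymem⟩
        by_cases hx1 : x ∈ TT S (k+1)
        · exact Or.inr hx1
        · exact Or.inl ⟨(x, y), ⟨hy, hymem, hx1⟩, rfl⟩
      · rintro x (⟨⟨x', y⟩, ⟨hy, hymem, _⟩, rfl⟩ | hx1)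
        · exact ⟨y, hy, hymem⟩
        · rw [mem_TT_iff hfin] at hx1 ⊢
          omega
    rw [him]
    exact (hEmeas.image_of_measurable_injOn measurable_fst hinj).union hT1

/-- Borel sets in `X × X` with uniformly finite sections have Borel projections. -/
lemma measurableSet_proj_of_small_sections (D : ℕ) {S : Set (X × X)} (hS : MeasurableSet S)
    (hfin : ∀ x, {y | (x,y) ∈ S}.Finite) (hcard : ∀ x, {y | (x,y) ∈ S}.ncard ≤ D) :
    MeasurableSet {x | ∃ y, (x, y) ∈ S} := by
  obtain ⟨h, hemb⟩ := MeasureTheory.exists_measurableEmbedding_real X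
  set m : X × X → X × ℝ := fun p => (p.1, h p.2) with hm
  have hmmeas : Measurable m := measurable_fst.prodMk (hemb.measurable.comp measurable_snd)
  have hminj : Function.Injective m := by
    rintro ⟨a, b⟩ ⟨a', b'⟩ hab
    simp only [hm, Prod.mk.injEq] at hab
    exact Prod.ext hab.1 (hemb.injective hab.2)
  have hmemb : MeasurableEmbedding m := hmmeas.measurableEmbedding hminj
  set S' : Set (X × ℝ) := m '' S with hS'
  have hS'meas : MeasurableSet S' := hmemb.measurableSet_image' hS
  have hsec : ∀ x, {t | (x, t) ∈ S'} = h '' {y | (x, y) ∈ S} := by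
    intro x
    ext t
    constructor
    · rintro ⟨⟨a, b⟩, hab, habe⟩
      simp only [hm, Prod.mk.injEq] at habe
      exact ⟨b, by rw [habe.1] at hab; exact hab, habe.2⟩
    · rintro ⟨y, hy, rfl⟩
      exact ⟨(x, y), hy, rfl⟩
  have hfin' : ∀ x, {t | (x,t) ∈ S'}.Finite := by
    intro x; rw [hsec x]; exact (hfin x).image h
  have hcard' : ∀ x, {t | (x,t) ∈ S'}.ncard ≤ D := by
    intro x; rw [hsec x, Set.ncard_image_of_injOn (hemb.injective.injOn)]
    exact hcard x
  have key := measurableSet_TT D hS'meas hfin' hcard' 1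
  have : {x | ∃ y, (x, y) ∈ S} = TT S' 1 := by
    ext x
    constructor
    · rintro ⟨y, hy⟩
      exact ⟨fun _ => h y, Subsingleton.strictMono _, fun i => ⟨(x, y), hy, rfl⟩⟩
    · rintro ⟨y, _, hymem⟩
      obtain ⟨⟨a, b⟩, hab, habe⟩ := hymem 0
      simp only [hm, Prod.mk.injEq] at habe
      exact ⟨b, by rw [habe.1] at hab; exact hab⟩
  rw [this]
  exact key

end LN

section Cantor

noncomputable def cantorMap (a : ℕ → Bool) : ℝ :=
  ∑' n : ℕ, (cond (a n) 1 0 : ℝ) * (2 * (3:ℝ)⁻¹ ^ (n + 1))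

lemma cantor_w_pos (n : ℕ) : (0:ℝ) < 2 * (3:ℝ)⁻¹ ^ (n + 1) := by positivity

lemma cantor_summable : Summable (fun n : ℕ => 2 * (3:ℝ)⁻¹ ^ (n + 1)) := by
  have h : Summable (fun n : ℕ => (3:ℝ)⁻¹ ^ n) :=
    summable_geometric_of_lt_one (by norm_num) (by norm_num)
  exact (h.mul_left (2 * (3:ℝ)⁻¹)).congr (fun n => by rw [pow_succ]; ring)

lemma cantor_term_bound (a : ℕ → Bool) (n : ℕ) :
    ‖(cond (a n) 1 0 : ℝ) * (2 * (3:ℝ)⁻¹ ^ (n + 1))‖ ≤ 2 * (3:ℝ)⁻¹ ^ (n + 1) := by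
  rw [Real.norm_eq_abs, abs_mul]
  have h1 : |(cond (a n) 1 0 : ℝ)| ≤ 1 := by cases a n <;> simp
  have h2 : |2 * (3:ℝ)⁻¹ ^ (n + 1)| = 2 * (3:ℝ)⁻¹ ^ (n+1) := abs_of_pos (cantor_w_pos n)
  rw [h2]
  nlinarith [cantor_w_pos n]

lemma cantor_summable' (a : ℕ → Bool) :
    Summable (fun n : ℕ => (cond (a n) 1 0 : ℝ) * (2 * (3:ℝ)⁻¹ ^ (n + 1))) :=
  Summable.of_norm_bounded cantor_summable (cantor_term_bound a)

lemma cantor_continuous : Continuous cantorMap := by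
  apply continuous_tsum (u := fun n => 2 * (3:ℝ)⁻¹ ^ (n + 1)) _ cantor_summable
  · intro n a
    exact cantor_term_bound a n
  · intro n
    have hb : Continuous (fun b : Bool => (cond b 1 0 : ℝ)) := continuous_of_discreteTopology
    exact (hb.comp (continuous_apply n)).mul continuous_const

lemma cantor_tail_sum (n : ℕ) :
    ∑' j : ℕ, 2 * (3:ℝ)⁻¹ ^ (j + (n + 1) + 1) = (3:ℝ)⁻¹ ^ (n + 1) := by
  have h1 : ∀ j : ℕ, 2 * (3:ℝ)⁻¹ ^ (j + (n + 1) + 1) =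
      (3:ℝ)⁻¹ ^ j * (2 * (3:ℝ)⁻¹ ^ (n + 2)) := fun j => by ring
  rw [tsum_congr h1, tsum_mul_right, tsum_geometric_of_lt_one (by norm_num) (by norm_num)]
  have : (1 - (3:ℝ)⁻¹)⁻¹ = 3 / 2 := by norm_num
  rw [this]
  ring

set_option maxHeartbeats 1000000 in
lemma cantor_injective : Function.Injective cantorMap := by
  intro a b hab
  by_contra hne
  have hex : ∃ n, a n ≠ b n := Function.ne_iff.mp hne
  set n := Nat.find hex with hn
  have hfind : a n ≠ b n := Nat.find_spec hex
  have hlt : ∀ m < n, a m = b m := fun m hm => not_not.mp (Nat.find_min hex hm)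
  set d : ℕ → ℝ := fun k => (cond (a k) 1 0 : ℝ) * (2 * (3:ℝ)⁻¹ ^ (k + 1)) -
      (cond (b k) 1 0 : ℝ) * (2 * (3:ℝ)⁻¹ ^ (k + 1)) with hd
  have hsum : Summable d := (cantor_summable' a).sub (cantor_summable' b)
  have htsum : ∑' k, d k = 0 := by
    have h1 : ∑' k, d k = cantorMap a - cantorMap b :=
      Summable.tsum_sub (cantor_summable' a) (cantor_summable' b)
    rw [h1, hab, sub_self]
  have hsplit : ∑ k ∈ Finset.range (n + 1), d k + ∑' k : ℕ, d (k + (n + 1)) = ∑' k, d k :=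
    Summable.sum_add_tsum_nat_add (n + 1) hsum
  have hzero : ∀ m < n, d m = 0 := by
    intro m hm
    simp only [hd, hlt m hm, sub_self]
  have hfin : ∑ k ∈ Finset.range (n + 1), d k = d n := by
    rw [Finset.sum_range_succ,
      Finset.sum_eq_zero (fun m hm => hzero m (Finset.mem_range.mp hm)), zero_add]
  have hw := cantor_w_pos n
  have hdn : |d n| = 2 * (3:ℝ)⁻¹ ^ (n + 1) := by
    rcases Bool.eq_false_or_eq_true (a n) with h | h <;>
      rcases Bool.eq_false_or_eq_true (b n) with h' | h'
    · rw [h, h'] at hfind; exact absurd rfl hfind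
    · have he : d n = 2 * (3:ℝ)⁻¹ ^ (n+1) := by simp [hd, h, h']
      rw [he, abs_of_pos hw]
    · have he : d n = -(2 * (3:ℝ)⁻¹ ^ (n+1)) := by simp [hd, h, h']
      rw [he, abs_neg, abs_of_pos hw]
    · rw [h, h'] at hfind; exact absurd rfl hfind
  have hs : Summable (fun k : ℕ => d (k + (n + 1))) := (summable_nat_add_iff (n+1)).2 hsum
  have hsb : Summable (fun k : ℕ => 2 * (3:ℝ)⁻¹ ^ (k + (n + 1) + 1)) :=
    (summable_nat_add_iff (n+1)).2 cantor_summable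
  have hterm : ∀ k : ℕ, |d (k + (n + 1))| ≤ 2 * (3:ℝ)⁻¹ ^ (k + (n + 1) + 1) := by
    intro k
    set m := k + (n + 1) with hm
    have hwm := cantor_w_pos m
    have he : d m = ((cond (a m) 1 0 : ℝ) - (cond (b m) 1 0 : ℝ)) * (2 * (3:ℝ)⁻¹ ^ (m + 1)) := by
      simp only [hd]; ring
    rw [he, abs_mul, abs_of_pos hwm]
    have : |(cond (a m) 1 0 : ℝ) - (cond (b m) 1 0 : ℝ)| ≤ 1 := by
      cases a m <;> cases b m <;> norm_num
    nlinarith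
  have htail : |∑' k : ℕ, d (k + (n + 1))| ≤ (3:ℝ)⁻¹ ^ (n + 1) := by
    calc |∑' k : ℕ, d (k + (n + 1))| ≤ ∑' k : ℕ, |d (k + (n + 1))| := by
          rw [← Real.norm_eq_abs]
          exact norm_tsum_le_tsum_norm (hs.abs.congr (fun k => (Real.norm_eq_abs _).symm))
      _ ≤ ∑' k : ℕ, 2 * (3:ℝ)⁻¹ ^ (k + (n + 1) + 1) := Summable.tsum_le_tsum hterm hs.abs hsb
      _ = (3:ℝ)⁻¹ ^ (n + 1) := cantor_tail_sum n
  have hneg : d n = - ∑' k : ℕ, d (k + (n + 1)) := by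
    rw [hfin] at hsplit; rw [htsum] at hsplit; linarith
  have : |d n| ≤ (3:ℝ)⁻¹ ^ (n + 1) := by rw [hneg, abs_neg]; exact htail
  rw [hdn] at this
  have h3 : (0:ℝ) < (3:ℝ)⁻¹ ^ (n + 1) := by positivity
  linarith

lemma cantor_mem_Icc (a : ℕ → Bool) : cantorMap a ∈ Set.Icc (0:ℝ) 1 := by
  constructor
  · apply tsum_nonneg
    intro k
    have := cantor_w_pos k
    cases a k <;> simp [le_of_lt (cantor_w_pos k)]
  · have h1 : cantorMap a ≤ ∑' n : ℕ, 2 * (3:ℝ)⁻¹ ^ (n + 1) := by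
      apply Summable.tsum_le_tsum _ (cantor_summable' a) cantor_summable
      intro k
      have hb := cantor_term_bound a k
      rw [Real.norm_eq_abs] at hb
      exact (le_abs_self _).trans hb
    have h2 : ∑' n : ℕ, 2 * (3:ℝ)⁻¹ ^ (n + 1) = 1 := by
      have h1' : ∀ j : ℕ, 2 * (3:ℝ)⁻¹ ^ (j + 1) = (3:ℝ)⁻¹ ^ j * (2 * (3:ℝ)⁻¹) := fun j => by ring
      rw [tsum_congr h1', tsum_mul_right, tsum_geometric_of_lt_one (by norm_num) (by norm_num)]
      norm_num
    rw [h2] at h1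
    exact h1

end Cantor

-- assume cantorMap facts (proved in p2)
section Star

variable {I : Type*} [MeasurableSpace I] [StandardBorelSpace I]

/-- The sequence 0, 1, 1/2, 1/3, ... -/
noncomputable def seqR : ℕ → ℝ
  | 0 => 0
  | n + 1 => ((n:ℝ) + 1)⁻¹

lemma seqR_injective : Function.Injective seqR := by
  intro m k h
  match m, k with
  | 0, 0 => rfl
  | 0, k + 1 =>
    exfalso
    simp only [seqR] at h
    have : (0:ℝ) < ((k:ℝ)+1)⁻¹ := by positivity
    rw [← h] at this; exact lt_irrefl _ this
  | m + 1, 0 =>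
    exfalso
    simp only [seqR] at h
    have : (0:ℝ) < ((m:ℝ)+1)⁻¹ := by positivity
    rw [h] at this; exact lt_irrefl _ this
  | m + 1, k + 1 =>
    simp only [seqR] at h
    have h2 : ((m:ℝ)+1) = ((k:ℝ)+1) := inv_injective h
    have : m = k := by exact_mod_cast (by linarith : (m:ℝ) = (k:ℝ))
    omega

lemma seqR_mem_Icc (n : ℕ) : seqR n ∈ Set.Icc (0:ℝ) 1 := by
  match n with
  | 0 => simp [seqR]
  | n + 1 =>
    simp only [seqR]
    constructor
    · positivity
    · rw [inv_le_one_iff₀]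
      right
      have : (0:ℝ) ≤ (n:ℝ) := Nat.cast_nonneg n
      linarith

lemma seqR_range_compact : IsCompact (Set.range seqR) := by
  have htend : Filter.Tendsto (fun n : ℕ => ((n:ℝ) + 1)⁻¹) Filter.atTop (nhds 0) :=
    tendsto_one_div_add_atTop_nhds_zero_nat.congr (fun n => by rw [one_div])
  have h := htend.isCompact_insert_range
  have : insert (0:ℝ) (Set.range fun n : ℕ => ((n:ℝ) + 1)⁻¹) = Set.range seqR := by
    ext t
    constructor
    · rintro (rfl | ⟨n, rfl⟩)
      · exact ⟨0, rfl⟩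
      · exact ⟨n + 1, rfl⟩
    · rintro ⟨n, rfl⟩
      match n with
      | 0 => exact Or.inl rfl
      | n + 1 => exact Or.inr ⟨n, rfl⟩
  rwa [this] at h

/-- Every Borel subset of a standard Borel space admits a measurable map to `[0,1]`
injective on it with compact image. -/
lemma exists_compact_model (S : Set I) (hS : MeasurableSet S) :
    ∃ f : I → ℝ, Measurable f ∧ Set.InjOn f S ∧ IsCompact (f '' S) ∧
      f '' S ⊆ Set.Icc 0 1 := by
  haveI hSB : StandardBorelSpace S := hS.standardBorel
  by_cases hc : S.Countable
  · haveI : Countable S := hc.to_subtype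
    by_cases hfin : S.Finite
    · -- finite case : use an injection to ℕ, values 1/(n+1)
      obtain ⟨e, he⟩ := exists_injective_nat (↥S)
      refine ⟨fun x => if hx : x ∈ S then seqR (e ⟨x, hx⟩ + 1) else 0, ?_, ?_, ?_, ?_⟩
      · exact Measurable.dite (measurable_of_countable (fun y : ↥S => seqR (e y + 1))) measurable_const hS
      · intro x hx y hy hxy
        simp only [dif_pos hx, dif_pos hy] at hxy
        have := he (by
          have := seqR_injective hxy
          omega : e ⟨x, hx⟩ = e ⟨y, hy⟩)
        exact Subtype.mk_eq_mk.mp this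
      · apply Set.Finite.isCompact
        exact (hfin.image _)
      · rintro t ⟨x, hx, rfl⟩
        simp only [dif_pos hx]
        exact seqR_mem_Icc _
    · -- countably infinite case : use a bijection with ℕ
      haveI : Infinite S := Set.infinite_coe_iff.mpr hfin
      obtain ⟨e⟩ := nonempty_equiv_of_countable (α := ↥S) (β := ℕ)
      refine ⟨fun x => if hx : x ∈ S then seqR (e ⟨x, hx⟩) else 0, ?_, ?_, ?_, ?_⟩
      · exact Measurable.dite (measurable_of_countable (fun y : ↥S => seqR (e y))) measurable_const hS
      · intro x hx y hy hxy
        simp only [dif_pos hx, dif_pos hy] at hxy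
        have := e.injective (seqR_injective hxy)
        exact Subtype.mk_eq_mk.mp this
      · have him : (fun x => if hx : x ∈ S then seqR (e ⟨x, hx⟩) else 0) '' S =
            Set.range seqR := by
          apply Set.Subset.antisymm
          · rintro t ⟨x, hx, rfl⟩
            simp only [dif_pos hx]
            exact ⟨_, rfl⟩
          · rintro t ⟨n, rfl⟩
            refine ⟨(e.symm n : I), (e.symm n).prop, ?_⟩
            simp only [dif_pos (e.symm n).prop]
            congr 1
            rw [Subtype.coe_eta, Equiv.apply_symm_apply]
        rw [him]
        exact seqR_range_compact
      · rintro t ⟨x, hx, rfl⟩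
        simp only [dif_pos hx]
        exact seqR_mem_Icc _
  · -- uncountable case : Borel-isomorphic to Cantor space
    haveI : ¬ Countable ↥S := fun h => hc (Set.countable_coe_iff.mpr h)
    let e : ↥S ≃ᵐ (ℕ → Bool) := PolishSpace.measurableEquivNatBoolOfNotCountable this
    refine ⟨fun x => if hx : x ∈ S then cantorMap (e ⟨x, hx⟩) else 0, ?_, ?_, ?_, ?_⟩
    · exact Measurable.dite (cantor_continuous.measurable.comp e.measurable)
        measurable_const hS
    · intro x hx y hy hxy
      simp only [dif_pos hx, dif_pos hy] at hxy
      have := e.injective (cantor_injective hxy)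
      exact Subtype.mk_eq_mk.mp this
    · have him : (fun x => if hx : x ∈ S then cantorMap (e ⟨x, hx⟩) else 0) '' S =
          Set.range cantorMap := by
        apply Set.Subset.antisymm
        · rintro t ⟨x, hx, rfl⟩
          simp only [dif_pos hx]
          exact ⟨_, rfl⟩
        · rintro t ⟨a, rfl⟩
          refine ⟨(e.symm a : I), (e.symm a).prop, ?_⟩
          simp only [dif_pos (e.symm a).prop]
          congr 1
          rw [Subtype.coe_eta, MeasurableEquiv.apply_symm_apply]
      rw [him]
      exact isCompact_range cantor_continuous
    · rintro t ⟨x, hx, rfl⟩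
      simp only [dif_pos hx]
      exact cantor_mem_Icc _

end Star

/-- Greedy coloring along the countable coloring `ρ`. -/
noncomputable def greedy {I : Type*} (D : ℕ) (G : I → I → Prop) (ρ : I → ℕ) (n : ℕ) (x : I) :
    Fin (D + 1) :=
  if h : ∃ j : ℕ, j < D + 1 ∧ ∀ y, G x y → ∀ _ : ρ y < n, ((greedy D G ρ (ρ y) y : ℕ) ≠ j)
  then ⟨Nat.find h, (Nat.find_spec h).1⟩
  else ⟨0, Nat.succ_pos D⟩
termination_by n
decreasing_by all_goals assumption

section Coloring

variable {I : Type*} [MeasurableSpace I] [StandardBorelSpace I]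
variable (D : ℕ) (G : I → I → Prop)

/-- With bounded degree, a free color always exists. -/
lemma greedy_exists (hfin : ∀ x : I, {y | G x y}.Finite)
    (hdeg : ∀ x : I, {y | G x y}.ncard ≤ D) (ρ : I → ℕ) (n : ℕ) (x : I) :
    ∃ j : ℕ, j < D + 1 ∧ ∀ y, G x y → ∀ _ : ρ y < n, ((greedy D G ρ (ρ y) y : ℕ) ≠ j) := by
  set bad := (fun y => ((greedy D G ρ (ρ y) y : ℕ))) '' {y | G x y} with hbad
  have hbadcard : bad.ncard ≤ D := le_trans (Set.ncard_image_le (hfin x)) (hdeg x)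
  have hlt : bad.ncard < ((Finset.range (D+1) : Finset ℕ) : Set ℕ).ncard := by
    rw [Set.ncard_coe_finset, Finset.card_range]
    omega
  obtain ⟨j, hj1, hj2⟩ := Set.exists_mem_notMem_of_ncard_lt_ncard hlt
    ((hfin x).image _)
  refine ⟨j, by simpa using hj1, fun y hy hry hval => hj2 ?_⟩
  exact ⟨y, hy, hval⟩

lemma greedy_eq (hfin : ∀ x : I, {y | G x y}.Finite)
    (hdeg : ∀ x : I, {y | G x y}.ncard ≤ D) (ρ : I → ℕ) (n : ℕ) (x : I) :
    greedy D G ρ n x =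
      ⟨Nat.find (greedy_exists D G hfin hdeg ρ n x),
        (Nat.find_spec (greedy_exists D G hfin hdeg ρ n x)).1⟩ := by
  rw [greedy, dif_pos (greedy_exists D G hfin hdeg ρ n x)]

lemma greedy_avoid (hfin : ∀ x : I, {y | G x y}.Finite)
    (hdeg : ∀ x : I, {y | G x y}.ncard ≤ D) (ρ : I → ℕ) (n : ℕ) (x y : I)
    (hxy : G x y) (hr : ρ y < n) : greedy D G ρ (ρ y) y ≠ greedy D G ρ n x := by
  intro hcontra
  have hsp := (Nat.find_spec (greedy_exists D G hfin hdeg ρ n x)).2 y hxy hr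
  rw [greedy_eq D G hfin hdeg ρ n x] at hcontra
  exact hsp (by rw [hcontra])

/-- The "bad set" for stage `n` and color value `j`. -/
def BadSet (ρ : I → ℕ) (n j : ℕ) : Set I :=
  {x | ∃ y, G x y ∧ ρ y < n ∧ ((greedy D G ρ (ρ y) y : ℕ) = j)}

lemma mem_greedy_eq_iff (hfin : ∀ x : I, {y | G x y}.Finite)
    (hdeg : ∀ x : I, {y | G x y}.ncard ≤ D) (ρ : I → ℕ) (n : ℕ) (k : Fin (D+1)) (x : I) :
    greedy D G ρ n x = k ↔
      x ∉ BadSet D G ρ n (k : ℕ) ∧ ∀ j < (k : ℕ), x ∈ BadSet D G ρ n j := by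
  set hex := greedy_exists D G hfin hdeg ρ n x with hhex
  rw [greedy_eq D G hfin hdeg ρ n x]
  constructor
  · intro hk
    have hkval : Nat.find hex = (k : ℕ) := by simpa using congrArg Fin.val hk
    constructor
    · rintro ⟨y, hy, hr, hval⟩
      exact (Nat.find_spec hex).2 y hy hr (hval.trans hkval.symm)
    · intro j hj
      have hj' : j < Nat.find hex := by omega
      have hmin := Nat.find_min hex hj'
      push_neg at hmin
      obtain ⟨y, hy, hr, hval⟩ := hmin (by
        have h1 := (Nat.find_spec hex).1
        omega)
      exact ⟨y, hy, hr, hval⟩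
  · rintro ⟨hnot, hall⟩
    have hle : Nat.find hex ≤ (k : ℕ) := by
      apply Nat.find_le
      refine ⟨k.isLt, fun y hy hr hval => hnot ⟨y, hy, hr, hval⟩⟩
    have hge : ¬ (Nat.find hex < (k : ℕ)) := by
      intro hlt
      obtain ⟨y, hy, hr, hval⟩ := hall _ hlt
      exact (Nat.find_spec hex).2 y hy hr hval
    apply Fin.ext
    show Nat.find hex = (k : ℕ)
    omega

lemma greedy_measurable
    (hGmeas : MeasurableSet {p : I × I | G p.1 p.2})
    (hfin : ∀ x : I, {y | G x y}.Finite)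
    (hdeg : ∀ x : I, {y | G x y}.ncard ≤ D) (ρ : I → ℕ) (hρ : Measurable ρ) :
    ∀ n : ℕ, Measurable (fun x => greedy D G ρ n x) := by
  intro n
  induction n using Nat.strong_induction_on with
  | _ n ih =>
    have hBad : ∀ j : ℕ, MeasurableSet (BadSet D G ρ n j) := by
      intro j
      have hV : MeasurableSet {y | ρ y < n ∧ ((greedy D G ρ (ρ y) y : ℕ) = j)} := by
        have : {y | ρ y < n ∧ ((greedy D G ρ (ρ y) y : ℕ) = j)} =
            ⋃ (m : ℕ) (_ : m < n), (ρ ⁻¹' {m}) ∩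
              ((fun y => ((greedy D G ρ m y : ℕ))) ⁻¹' {j}) := by
          ext y
          simp only [Set.mem_iUnion, Set.mem_inter_iff, Set.mem_preimage,
            Set.mem_singleton_iff, Set.mem_setOf_eq]
          constructor
          · rintro ⟨h1, h2⟩
            exact ⟨ρ y, h1, rfl, h2⟩
          · rintro ⟨m, hm, hρm, hg⟩
            rw [hρm]
            exact ⟨hm, hg⟩
        rw [this]
        refine MeasurableSet.iUnion fun m => MeasurableSet.iUnion fun hm => ?_
        exact (hρ (MeasurableSet.singleton m)).inter
          ((measurable_from_top.comp (ih m hm)) (MeasurableSet.singleton j))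
      have hS : MeasurableSet {p : I × I | G p.1 p.2 ∧
          (ρ p.2 < n ∧ ((greedy D G ρ (ρ p.2) p.2 : ℕ) = j))} :=
        hGmeas.inter (hV.preimage measurable_snd)
      have heq : BadSet D G ρ n j = {x | ∃ y, (x, y) ∈ {p : I × I | G p.1 p.2 ∧
          (ρ p.2 < n ∧ ((greedy D G ρ (ρ p.2) p.2 : ℕ) = j))}} := rfl
      rw [heq]
      apply measurableSet_proj_of_small_sections D hS
      · intro x
        exact (hfin x).subset (fun y hy => hy.1)
      · intro x
        exact le_trans (Set.ncard_le_ncard (fun y hy => hy.1) (hfin x)) (hdeg x)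
    apply measurable_to_countable'
    intro k
    have : (fun x => greedy D G ρ n x) ⁻¹' {k} =
        (BadSet D G ρ n (k : ℕ))ᶜ ∩ ⋂ (j : ℕ) (_ : j < (k : ℕ)), BadSet D G ρ n j := by
      ext x
      simp only [Set.mem_preimage, Set.mem_singleton_iff, Set.mem_inter_iff, Set.mem_compl_iff,
        Set.mem_iInter]
      exact mem_greedy_eq_iff D G hfin hdeg ρ n k x
    rw [this]
    exact ((hBad _).compl).inter
      (MeasurableSet.iInter fun j => MeasurableSet.iInter fun _ => hBad j)

end Coloring

section Rho

variable {I : Type*} [MeasurableSpace I] [StandardBorelSpace I]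
variable (D : ℕ) (G : I → I → Prop)

lemma exists_countable_coloring
    (hsym : Symmetric G) (hirr : Irreflexive G)
    (hGmeas : MeasurableSet {p : I × I | G p.1 p.2})
    (hfin : ∀ x : I, {y | G x y}.Finite) (hdeg : ∀ x : I, {y | G x y}.ncard ≤ D) :
    ∃ ρ : I → ℕ, Measurable ρ ∧ ∀ x y, G x y → ρ x ≠ ρ y := by
  obtain ⟨h, hemb⟩ := MeasureTheory.exists_measurableEmbedding_real I
  set e : ℚ × ℚ ≃ ℕ := Denumerable.eqv (ℚ × ℚ) with he
  set s : ℕ → Set I := fun n => h ⁻¹' (Set.Ioo ((e.symm n).1 : ℝ) ((e.symm n).2 : ℝ)) with hs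
  have hsmeas : ∀ n, MeasurableSet (s n) := fun n =>
    (measurableSet_Ioo).preimage hemb.measurable
  set M : ℕ → Set I := fun n => {x | ∃ y, G x y ∧ y ∈ s n} with hM
  have hMmeas : ∀ n, MeasurableSet (M n) := by
    intro n
    have hS : MeasurableSet {p : I × I | G p.1 p.2 ∧ p.2 ∈ s n} :=
      hGmeas.inter ((hsmeas n).preimage measurable_snd)
    have : M n = {x | ∃ y, (x, y) ∈ {p : I × I | G p.1 p.2 ∧ p.2 ∈ s n}} := rfl
    rw [this]
    apply measurableSet_proj_of_small_sections D hS
    · exact fun x => (hfin x).subset (fun y hy => hy.1)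
    · exact fun x => le_trans (Set.ncard_le_ncard (fun y hy => hy.1) (hfin x)) (hdeg x)
  set good : ℕ → Set I := fun n => s n ∩ (M n)ᶜ with hgood
  have htotal : ∀ x, ∃ n, x ∈ good n := by
    intro x
    -- find a rational interval around h x avoiding images of neighbors
    have hT : ({y | G x y}.image h).Finite := (hfin x).image h
    have hnotmem : h x ∉ h '' {y | G x y} := by
      rintro ⟨y, hy, hxy⟩
      exact hirr x (by rwa [hemb.injective hxy] at hy)
    obtain ⟨δ, hδpos, hδ⟩ : ∃ δ : ℝ, 0 < δ ∧ ∀ t ∈ h '' {y | G x y}, δ ≤ |t - h x| := by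
      by_cases hne : (h '' {y | G x y}).Nonempty
      · set Tf := hT.toFinset with hTf
        have hTfne : Tf.Nonempty := by
          rwa [hTf, Set.Finite.toFinset_nonempty]
        set Df := Tf.image (fun t => |t - h x|) with hDf
        have hDfne : Df.Nonempty := hTfne.image _
        refine ⟨Df.min' hDfne, ?_, ?_⟩
        · obtain ⟨t, ht, hteq⟩ := Finset.mem_image.mp (Df.min'_mem hDfne)
          rw [← hteq]
          rw [Set.Finite.mem_toFinset] at ht
          have : t ≠ h x := fun hc => hnotmem (hc ▸ ht)
          have : t - h x ≠ 0 := sub_ne_zero.mpr this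
          exact abs_pos.mpr this
        · intro t ht
          apply Df.min'_le
          rw [hDf, Finset.mem_image]
          exact ⟨t, by rwa [hTf, Set.Finite.mem_toFinset], rfl⟩
      · exact ⟨1, one_pos, fun t ht => absurd ⟨t, ht⟩ hne⟩
    obtain ⟨q1, hq1a, hq1b⟩ := exists_rat_btwn (by linarith : h x - δ < h x)
    obtain ⟨q2, hq2a, hq2b⟩ := exists_rat_btwn (by linarith : h x < h x + δ)
    refine ⟨e (q1, q2), ?_, ?_⟩
    · show h x ∈ Set.Ioo ((e.symm (e (q1, q2))).1 : ℝ) ((e.symm (e (q1, q2))).2 : ℝ)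
      rw [Equiv.symm_apply_apply]
      exact ⟨hq1b, hq2a⟩
    · show x ∉ M (e (q1, q2))
      rintro ⟨y, hy, hys⟩
      have : h y ∈ Set.Ioo ((e.symm (e (q1, q2))).1 : ℝ) ((e.symm (e (q1, q2))).2 : ℝ) := hys
      rw [Equiv.symm_apply_apply] at this
      obtain ⟨hy1, hy2⟩ := this
      have habs : |h y - h x| < δ := by
        rw [abs_lt]
        constructor <;> nlinarith
      linarith [hδ (h y) ⟨y, hy, rfl⟩]
  refine ⟨fun x => Nat.find (htotal x), measurable_find htotal (fun k => ?_), ?_⟩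
  · exact ((hsmeas k).inter (hMmeas k).compl)
  · intro x y hxy hcontra
    have hx := Nat.find_spec (htotal x)
    have hy := Nat.find_spec (htotal y)
    have hcontra' : Nat.find (htotal x) = Nat.find (htotal y) := hcontra
    rw [hcontra'] at hx
    exact hx.2 ⟨y, hxy, hy.1⟩

end Rho



section X
variable {I : Type*} [MeasurableSpace I] [StandardBorelSpace I] (D : ℕ) (G : I → I → Prop)

lemma exists_finite_coloring (hsym : Symmetric G) (hirr : Irreflexive G)
    (hGmeas : MeasurableSet {p : I × I | G p.1 p.2})
    (hfin : ∀ x : I, {y | G x y}.Finite) (hdeg : ∀ x : I, {y | G x y}.ncard ≤ D) :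
    ∃ c : I → Fin (D+1), Measurable c ∧ ∀ x y, G x y → c x ≠ c y := by
  obtain ⟨ρ, hρmeas, hρ⟩ := exists_countable_coloring D G hsym hirr hGmeas hfin hdeg
  refine ⟨fun x => greedy D G ρ (ρ x) x, ?_, ?_⟩
  · apply measurable_to_countable'
    intro k
    have heq : (fun x => greedy D G ρ (ρ x) x) ⁻¹' {k} =
        ⋃ n : ℕ, (ρ ⁻¹' {n}) ∩ ((fun x => greedy D G ρ n x) ⁻¹' {k}) := by
      ext x
      simp only [Set.mem_preimage, Set.mem_singleton_iff, Set.mem_iUnion, Set.mem_inter_iff]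
      constructor
      · intro hx
        exact ⟨ρ x, rfl, hx⟩
      · rintro ⟨n, hn, hx⟩
        rw [hn]
        exact hx
    rw [heq]
    exact MeasurableSet.iUnion fun n => (hρmeas (MeasurableSet.singleton n)).inter
      ((greedy_measurable D G hGmeas hfin hdeg ρ hρmeas n) (MeasurableSet.singleton k))
  · intro x y hxy
    rcases Nat.lt_or_ge (ρ y) (ρ x) with hlt | hge
    · exact (greedy_avoid D G hfin hdeg ρ (ρ x) x y hxy hlt).symm
    · have hne := hρ x y hxy
      have hlt : ρ x < ρ y := by omega
      exact greedy_avoid D G hfin hdeg ρ (ρ y) y x (hsym hxy) hlt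

end X

/-- every Borel graph with degrees at most `D` on a standard Borel space
carries a compact metric `d₀` generating the Borel sets, of diameter at most `1`,
with `d₀(x,y) = 1` on every edge. -/
theorem stmt4 {I : Type*} [mI : MeasurableSpace I] [StandardBorelSpace I] (D : ℕ)
    (G : I → I → Prop) (hsym : Symmetric G) (hirr : Irreflexive G)
    (hGmeas : MeasurableSet {p : I × I | G p.1 p.2})
    (hfin : ∀ x : I, {y | G x y}.Finite) (hdeg : ∀ x : I, {y | G x y}.ncard ≤ D) :
    ∃ m : MetricSpace I,
      @borel I m.toPseudoMetricSpace.toUniformSpace.toTopologicalSpace = mI ∧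
      @CompactSpace I m.toPseudoMetricSpace.toUniformSpace.toTopologicalSpace ∧
      (∀ x y : I, @dist I m.toPseudoMetricSpace.toDist x y ≤ 1) ∧
      (∀ x y : I, G x y → @dist I m.toPseudoMetricSpace.toDist x y = 1) := by
  obtain ⟨c, hcmeas, hcproper⟩ := exists_finite_coloring D G hsym hirr hGmeas hfin hdeg
  set S : Fin (D+1) → Set I := fun k => c ⁻¹' {k} with hSdef
  have hSmeas : ∀ k, MeasurableSet (S k) := fun k => hcmeas (MeasurableSet.singleton k)
  choose f hfmeas hfinj hfcomp hficc using fun k => exists_compact_model (S k) (hSmeas k)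
  have hmemS : ∀ x : I, x ∈ S (c x) := fun x => rfl
  have hficc' : ∀ x : I, f (c x) x ∈ Set.Icc (0:ℝ) 1 := fun x =>
    hficc (c x) ⟨x, hmemS x, rfl⟩
  set χ : Fin (D+1) → (Fin (D+1) → ℝ) := fun k j => if k = j then 1 else 0 with hχ
  have hχinj : Function.Injective χ := by
    intro k k' hkk
    by_contra hne
    have h1 := congrFun hkk k
    simp only [hχ, if_pos rfl] at h1
    rw [if_neg (fun h => hne h.symm)] at h1
    exact one_ne_zero h1
  set F : I → (Fin (D+1) → ℝ) × ℝ := fun x => (χ (c x), f (c x) x / 2) with hF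
  have hFinj : Function.Injective F := by
    intro x y hxy
    have hc : c x = c y := hχinj (congrArg Prod.fst hxy)
    have h2 : f (c x) x / 2 = f (c y) y / 2 := congrArg Prod.snd hxy
    rw [← hc] at h2
    have h2' : f (c x) x = f (c x) y := by linarith
    have hyS : y ∈ S (c x) := by rw [hSdef]; exact hc.symm
    exact hfinj (c x) (hmemS x) hyS h2'
  have hFmeas : Measurable F := by
    apply Measurable.prodMk
    · exact (measurable_of_countable χ).comp hcmeas
    · have hrepr : (fun x => f (c x) x) =
          fun x => ∑ k : Fin (D+1), (S k).indicator (f k) x := by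
        funext x
        rw [Finset.sum_eq_single (c x)]
        · rw [Set.indicator_of_mem (hmemS x)]
        · intro k _ hk
          apply Set.indicator_of_notMem
          intro hx
          exact hk ((Set.mem_singleton_iff.mp hx).symm)
        · intro h
          exact absurd (Finset.mem_univ _) h
      have : Measurable fun x => f (c x) x := by
        rw [hrepr]
        exact Finset.measurable_sum _ (fun k _ => (hfmeas k).indicator (hSmeas k))
      exact this.div_const 2
  set m : MetricSpace I := MetricSpace.induced F hFinj inferInstance with hm
  have hdist : ∀ x y : I, @dist I m.toPseudoMetricSpace.toDist x y = dist (F x) (F y) :=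
    fun x y => rfl
  have hdist1 : ∀ x y : I, dist (χ (c x)) (χ (c y)) ≤ 1 := by
    intro x y
    rw [dist_pi_le_iff zero_le_one]
    intro j
    simp only [hχ, Real.dist_eq]
    split_ifs <;> norm_num
  have hdist2 : ∀ x y : I, dist (f (c x) x / 2) (f (c y) y / 2) ≤ 1/2 := by
    intro x y
    obtain ⟨ha, ha'⟩ := hficc' x
    obtain ⟨hb, hb'⟩ := hficc' y
    rw [Real.dist_eq, abs_le]
    constructor <;> nlinarith
  have hdiam : ∀ x y : I, @dist I m.toPseudoMetricSpace.toDist x y ≤ 1 := by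
    intro x y
    rw [hdist, Prod.dist_eq]
    exact max_le (hdist1 x y) (le_trans (hdist2 x y) (by norm_num))
  have hedge : ∀ x y : I, G x y → @dist I m.toPseudoMetricSpace.toDist x y = 1 := by
    intro x y hxy
    have hcne : c x ≠ c y := hcproper x y hxy
    rw [hdist, Prod.dist_eq]
    have h1 : dist (χ (c x)) (χ (c y)) = 1 := by
      apply le_antisymm (hdist1 x y)
      have hcoord := dist_le_pi_dist (χ (c x)) (χ (c y)) (c x)
      have : dist (χ (c x) (c x)) (χ (c y) (c x)) = 1 := by
        simp only [hχ, if_pos rfl, if_neg (fun h : c y = c x => hcne h.symm), Real.dist_eq]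
        norm_num
      linarith
    rw [h1]
    have := hdist2 x y
    rw [max_eq_left (by linarith)]
  have hrange : Set.range F = ⋃ k : Fin (D+1), (fun t => (χ k, t / 2)) '' (f k '' S k) := by
    apply Set.Subset.antisymm
    · rintro p ⟨x, rfl⟩
      exact Set.mem_iUnion.mpr ⟨c x, ⟨f (c x) x, ⟨x, hmemS x, rfl⟩, rfl⟩⟩
    · rintro p hp
      obtain ⟨k, t, ⟨x, hxS, rfl⟩, rfl⟩ := Set.mem_iUnion.mp hp
      have hcx : c x = k := hxS
      exact ⟨x, by rw [hF]; simp only [hcx]⟩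
  have hrangecomp : IsCompact (Set.range F) := by
    rw [hrange]
    apply isCompact_iUnion
    intro k
    exact (hfcomp k).image (continuous_const.prodMk (continuous_id.div_const 2))
  have htopeq : m.toPseudoMetricSpace.toUniformSpace.toTopologicalSpace
      = TopologicalSpace.induced F inferInstance := rfl
  refine ⟨m, ?_, ?_, hdiam, hedge⟩
  · rw [htopeq, borel_comap]
    have hb : borel ((Fin (D+1) → ℝ) × ℝ) = (inferInstance : MeasurableSpace _) :=
      BorelSpace.measurable_eq.symm
    rw [hb]
    have hFemb : MeasurableEmbedding F := hFmeas.measurableEmbedding hFinj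
    apply le_antisymm
    · rintro s ⟨B, hB, rfl⟩
      exact hFmeas hB
    · intro A hA
      exact ⟨F '' A, hFemb.measurableSet_image' hA, Set.preimage_image_eq A hFinj⟩
  · rw [← @isCompact_univ_iff]
    have hind : @Topology.IsInducing I _ m.toPseudoMetricSpace.toUniformSpace.toTopologicalSpace
        _ F := ⟨htopeq⟩
    rw [hind.isCompact_iff, Set.image_univ]
    exact hrangecomp
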